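/- Let d > 0 and g > 0 be real numbers. Then Σ_{j=1}^∞ Σ_{i=1}^∞ 8/(d²i² + g²j²)³ + Σ_{i=0}^∞ 4/(i·d + g)⁶ ≤ (1/d⁶)·( (3π·ζ(5))/2 + 4/5 + 4·(d/g) )·(d/g)⁵, where ζ(5) = Σ_{n=1}^∞ 1/n⁵ is the Riemann zeta value at 5. In particular all the series involved converge. -/

import Mathlib

open Real Filter Set MeasureTheory intervalIntegral Topology

noncomputable def F0 : ℝ → ℝ := fun x =>
  3 / 8 * Real.arctan x + 3 / 8 * (x / (1 + x ^ 2)) + 1 / 4 * (x / (1 + x ^ 2) ^ 2)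

lemma hF0deriv (x : ℝ) : HasDerivAt F0 (1 / (1 + x ^ 2) ^ 3) x := by
  have hpos : (0:ℝ) < 1 + x ^ 2 := by positivity
  have hne : (1 + x ^ 2 : ℝ) ≠ 0 := ne_of_gt hpos
  have h1 : HasDerivAt Real.arctan (1 / (1 + x ^ 2)) x := Real.hasDerivAt_arctan x
  have hden : HasDerivAt (fun x : ℝ => 1 + x ^ 2) (2 * x) x := by
    simpa using (hasDerivAt_pow 2 x).const_add 1
  have h2 : HasDerivAt (fun x : ℝ => x / (1 + x ^ 2))
      ((1 * (1 + x ^ 2) - x * (2 * x)) / (1 + x ^ 2) ^ 2) x :=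
    (hasDerivAt_id x).div hden hne
  have hden2 : HasDerivAt (fun x : ℝ => (1 + x ^ 2) ^ 2) (2 * (1 + x ^ 2) ^ 1 * (2 * x)) x :=
    hden.pow 2
  have h3 : HasDerivAt (fun x : ℝ => x / (1 + x ^ 2) ^ 2)
      ((1 * (1 + x ^ 2) ^ 2 - x * (2 * (1 + x ^ 2) ^ 1 * (2 * x))) / ((1 + x ^ 2) ^ 2) ^ 2) x :=
    (hasDerivAt_id x).div hden2 (by positivity)
  have := ((h1.const_mul (3/8 : ℝ)).add (h2.const_mul (3/8 : ℝ))).add (h3.const_mul (1/4 : ℝ))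
  convert this using 1
  · rfl
  · rfl
  · rfl
  field_simp
  ring

lemma hF0zero : F0 0 = 0 := by simp [F0]

lemma hF0mono : Monotone F0 :=
  monotone_of_deriv_nonneg (fun x => (hF0deriv x).differentiableAt)
    (fun x => by rw [(hF0deriv x).deriv]; positivity)

lemma hF0tendsto : Tendsto F0 atTop (𝓝 (3 * π / 16)) := by
  have h1 : Tendsto (fun x : ℝ => 3 / 8 * Real.arctan x) atTop (𝓝 (3 / 8 * (π / 2))) :=
    (Real.tendsto_arctan_atTop.mono_right nhdsWithin_le_nhds).const_mul _
  have key : Tendsto (fun x : ℝ => x / (1 + x ^ 2)) atTop (𝓝 0) := by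
    apply squeeze_zero' (g := fun x : ℝ => 1 / x)
    · filter_upwards [eventually_ge_atTop (0:ℝ)] with x hx
      positivity
    · filter_upwards [eventually_gt_atTop (0:ℝ)] with x hx
      rw [div_le_div_iff₀ (by positivity) hx]
      nlinarith
    · simpa using tendsto_inv_atTop_zero (𝕜 := ℝ)
  have key2 : Tendsto (fun x : ℝ => x / (1 + x ^ 2) ^ 2) atTop (𝓝 0) := by
    apply squeeze_zero' (g := fun x : ℝ => 1 / x)
    · filter_upwards [eventually_ge_atTop (0:ℝ)] with x hx
      positivity
    · filter_upwards [eventually_gt_atTop (0:ℝ)] with x hx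
      rw [div_le_div_iff₀ (by positivity) hx]
      nlinarith
    · simpa using tendsto_inv_atTop_zero (𝕜 := ℝ)
  have := (h1.add (key.const_mul (3/8 : ℝ))).add (key2.const_mul (1/4 : ℝ))
  convert this using 2
  · rfl
  ring

lemma hF0le (x : ℝ) : F0 x ≤ 3 * π / 16 := hF0mono.ge_of_tendsto hF0tendsto x

/-- Key integral bound 1. -/
lemma key1 (c a : ℝ) (hc : 0 < c) (ha : 0 < a) (N : ℕ) :
    ∑ i ∈ Finset.range N, 1 / (c ^ 2 * ((i : ℝ) + 1) ^ 2 + a ^ 2) ^ 3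
      ≤ 3 * π / (16 * c * a ^ 5) := by
  set f : ℝ → ℝ := fun x => 1 / (c ^ 2 * x ^ 2 + a ^ 2) ^ 3 with hf
  have hfpos : ∀ x : ℝ, 0 < c ^ 2 * x ^ 2 + a ^ 2 := fun x => by positivity
  have hanti : AntitoneOn f (Icc (0:ℝ) (0 + N)) := by
    intro x hx y hy hxy
    have hx0 : 0 ≤ x := hx.1
    apply one_div_le_one_div_of_le (by positivity)
    exact pow_le_pow_left₀ (by positivity) (by gcongr) 3
  have hsum := hanti.sum_le_integral
  have hcongr : ∑ i ∈ Finset.range N, 1 / (c ^ 2 * ((i : ℝ) + 1) ^ 2 + a ^ 2) ^ 3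
      = ∑ i ∈ Finset.range N, f (0 + ((i + 1 : ℕ) : ℝ)) := by
    apply Finset.sum_congr rfl; intro i _
    simp [hf]
  rw [hcongr]
  refine hsum.trans ?_
  -- compute the integral
  set F : ℝ → ℝ := fun x => 1 / (c * a ^ 5) * F0 (c * x / a) with hF
  have hFd : ∀ x : ℝ, HasDerivAt F (f x) x := by
    intro x
    have hin : HasDerivAt (fun x : ℝ => c * x / a) (c / a) x := by
      simpa using ((hasDerivAt_id x).const_mul c).div_const a
    have := ((hF0deriv (c * x / a)).comp x hin).const_mul (1 / (c * a ^ 5))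
    convert this using 1
    · rfl
    · rfl
    · rfl
    have h1 : (0:ℝ) < 1 + (c * x / a) ^ 2 := by positivity
    simp only [hf]
    field_simp [hf]
    ring
  have hint : IntervalIntegrable f volume 0 (0 + (N : ℝ)) := by
    apply Continuous.intervalIntegrable
    exact continuous_const.div (by continuity) (fun x => by positivity)
  rw [intervalIntegral.integral_eq_sub_of_hasDerivAt (fun x _ => hFd x) hint]
  have : F (0 + (N:ℝ)) - F 0 = 1 / (c * a ^ 5) * F0 (c * N / a) := by
    simp [hF, hF0zero]
  rw [this]
  have hb := hF0le (c * N / a)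
  calc 1 / (c * a ^ 5) * F0 (c * N / a) ≤ 1 / (c * a ^ 5) * (3 * π / 16) := by
        apply mul_le_mul_of_nonneg_left hb (by positivity)
    _ = 3 * π / (16 * c * a ^ 5) := by field_simp

/-- Key integral bound 2. -/
lemma key2 (d g : ℝ) (hd : 0 < d) (hg : 0 < g) (N : ℕ) :
    ∑ i ∈ Finset.range N, 1 / (((i : ℝ) + 1) * d + g) ^ 6 ≤ 1 / (5 * d * g ^ 5) := by
  set f : ℝ → ℝ := fun x => 1 / (x * d + g) ^ 6 with hf
  have hpos : ∀ x : ℝ, 0 ≤ x → 0 < x * d + g := fun x hx => by positivity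
  have hanti : AntitoneOn f (Icc (0:ℝ) (0 + N)) := by
    intro x hx y hy hxy
    have hx0 : 0 ≤ x := hx.1
    have h1 : (0:ℝ) < x * d + g := by positivity
    apply one_div_le_one_div_of_le (by positivity)
    exact pow_le_pow_left₀ h1.le (by nlinarith) 6
  have hsum := hanti.sum_le_integral
  have hcongr : ∑ i ∈ Finset.range N, 1 / (((i : ℝ) + 1) * d + g) ^ 6
      = ∑ i ∈ Finset.range N, f (0 + ((i + 1 : ℕ) : ℝ)) := by
    apply Finset.sum_congr rfl; intro i _
    simp [hf]
  rw [hcongr]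
  refine hsum.trans ?_
  set F : ℝ → ℝ := fun x => -(1 / (5 * d)) * ((x * d + g) ^ 5)⁻¹ with hF
  have hFd : ∀ x ∈ Icc (0:ℝ) (0 + N), HasDerivAt F (f x) x := by
    intro x hx
    have hxg : 0 < x * d + g := hpos x hx.1
    have hin : HasDerivAt (fun x : ℝ => x * d + g) d x := by
      simpa using ((hasDerivAt_id x).mul_const d).add_const g
    have hp : HasDerivAt (fun x : ℝ => (x * d + g) ^ 5) (5 * (x * d + g) ^ 4 * d) x := by
      simpa using hin.fun_pow 5
    have hinv := hp.inv (by positivity)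
    have := hinv.const_mul (-(1 / (5 * d)))
    convert this using 1
    · rfl
    · rfl
    · rfl
    field_simp [hf]
    ring
  have hint : IntervalIntegrable f volume 0 (0 + (N : ℝ)) := by
    apply ContinuousOn.intervalIntegrable
    apply ContinuousOn.div continuousOn_const (by fun_prop)
    intro x hx
    rw [Set.uIcc_of_le (by positivity)] at hx
    have := hpos x hx.1
    positivity
  rw [intervalIntegral.integral_eq_sub_of_hasDerivAt
    (fun x hx => hFd x (by rwa [Set.uIcc_of_le (by positivity)] at hx)) hint]
  have hNg : 0 < (N:ℝ) * d + g := hpos _ (Nat.cast_nonneg N)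
  have : F (0 + (N:ℝ)) - F 0 = 1 / (5 * d * g ^ 5) - 1 / (5 * d) * (((N:ℝ) * d + g) ^ 5)⁻¹ := by
    simp only [hF, zero_add, zero_mul]
    field_simp
    ring
  rw [this]
  have : 0 ≤ 1 / (5 * d) * (((N:ℝ) * d + g) ^ 5)⁻¹ := by positivity
  linarith

lemma rowlem (c a : ℝ) (hc : 0 < c) (ha : 0 < a) :
    Summable (fun i : ℕ => 8 / (c ^ 2 * ((i : ℝ) + 1) ^ 2 + a ^ 2) ^ 3) ∧
    ∑' i : ℕ, 8 / (c ^ 2 * ((i : ℝ) + 1) ^ 2 + a ^ 2) ^ 3 ≤ 3 * π / (2 * c * a ^ 5) := by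
  have hb : ∀ N, ∑ i ∈ Finset.range N, 8 / (c ^ 2 * ((i : ℝ) + 1) ^ 2 + a ^ 2) ^ 3
      ≤ 3 * π / (2 * c * a ^ 5) := by
    intro N
    have h1 : ∑ i ∈ Finset.range N, 8 / (c ^ 2 * ((i : ℝ) + 1) ^ 2 + a ^ 2) ^ 3
        = 8 * ∑ i ∈ Finset.range N, 1 / (c ^ 2 * ((i : ℝ) + 1) ^ 2 + a ^ 2) ^ 3 := by
      rw [Finset.mul_sum]
      exact Finset.sum_congr rfl (fun i _ => by ring)
    rw [h1]
    have hk := key1 c a hc ha N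
    calc 8 * ∑ i ∈ Finset.range N, 1 / (c ^ 2 * ((i : ℝ) + 1) ^ 2 + a ^ 2) ^ 3
        ≤ 8 * (3 * π / (16 * c * a ^ 5)) := by linarith
      _ = 3 * π / (2 * c * a ^ 5) := by field_simp; ring
  have hnn : ∀ i : ℕ, 0 ≤ 8 / (c ^ 2 * ((i : ℝ) + 1) ^ 2 + a ^ 2) ^ 3 := fun i => by positivity
  exact ⟨summable_of_sum_range_le hnn hb, Real.tsum_le_of_sum_range_le hnn hb⟩

/-- Bound on the interaction energy (in units of the van der Waals coefficient `C`)
of a single excited atom with all distant atoms: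
`Σ_{j≥1} Σ_{i≥1} 8/(d²i² + g²j²)³ + Σ_{i≥0} 4/(i·d + g)⁶
  ≤ (1/d⁶)·(3π·ζ(5)/2 + 4/5 + 4·(d/g))·(d/g)⁵`. -/
theorem distant_interaction_bound (d g : ℝ) (hd : 0 < d) (hg : 0 < g) :
    Summable (fun p : ℕ × ℕ =>
      8 / (d ^ 2 * ((p.1 : ℝ) + 1) ^ 2 + g ^ 2 * ((p.2 : ℝ) + 1) ^ 2) ^ 3) ∧
    Summable (fun i : ℕ => 4 / ((i : ℝ) * d + g) ^ 6) ∧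
    Summable (fun n : ℕ => 1 / ((n : ℝ) + 1) ^ 5) ∧
    (∑' p : ℕ × ℕ,
        8 / (d ^ 2 * ((p.1 : ℝ) + 1) ^ 2 + g ^ 2 * ((p.2 : ℝ) + 1) ^ 2) ^ 3)
      + (∑' i : ℕ, 4 / ((i : ℝ) * d + g) ^ 6)
    ≤ (1 / d ^ 6) *
        ((3 * Real.pi * (∑' n : ℕ, 1 / ((n : ℝ) + 1) ^ 5)) / 2
          + 4 / 5 + 4 * (d / g)) * (d / g) ^ 5 := by
  -- zeta(5) series
  have hZ : Summable (fun n : ℕ => 1 / ((n : ℝ) + 1) ^ 5) := by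
    have h5 : Summable (fun n : ℕ => 1 / (n : ℝ) ^ 5) :=
      Real.summable_one_div_nat_pow.mpr (by norm_num)
    exact ((summable_nat_add_iff 1).mpr h5).congr (fun n => by push_cast; ring)
  set Z := ∑' n : ℕ, 1 / ((n : ℝ) + 1) ^ 5 with hZdef
  have hZnn : 0 ≤ Z := tsum_nonneg (fun n => by positivity)
  set f : ℕ × ℕ → ℝ := fun p =>
    8 / (d ^ 2 * ((p.1 : ℝ) + 1) ^ 2 + g ^ 2 * ((p.2 : ℝ) + 1) ^ 2) ^ 3 with hfdef
  have hfnn : ∀ p, 0 ≤ f p := fun p => by positivity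
  -- rows: fixed i, sum over j
  have h₁ : ∀ i : ℕ, Summable fun j => f (i, j) := by
    intro i
    exact (rowlem g (d * ((i : ℝ) + 1)) hg (by positivity)).1.congr
      (fun j => by simp only [hfdef]; rw [show g ^ 2 * ((j:ℝ)+1) ^ 2 + (d * ((i:ℝ)+1)) ^ 2
        = d ^ 2 * ((i:ℝ)+1) ^ 2 + g ^ 2 * ((j:ℝ)+1) ^ 2 from by ring])
  have h₁b : ∀ i : ℕ, ∑' j, f (i, j) ≤ 3 * π / (2 * g * d ^ 5) * (1 / ((i:ℝ)+1) ^ 5) := by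
    intro i
    have h := (rowlem g (d * ((i : ℝ) + 1)) hg (by positivity)).2
    have he : ∑' j : ℕ, 8 / (g ^ 2 * ((j:ℝ)+1) ^ 2 + (d * ((i:ℝ)+1)) ^ 2) ^ 3
        = ∑' j, f (i, j) := by
      apply tsum_congr; intro j
      simp only [hfdef]
      rw [show g ^ 2 * ((j:ℝ)+1) ^ 2 + (d * ((i:ℝ)+1)) ^ 2
        = d ^ 2 * ((i:ℝ)+1) ^ 2 + g ^ 2 * ((j:ℝ)+1) ^ 2 from by ring]
    rw [he] at h
    refine h.trans (le_of_eq ?_)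
    have : ((i:ℝ)+1) ≠ 0 := by positivity
    field_simp
  -- columns: fixed j, sum over i
  have h₂ : ∀ j : ℕ, Summable fun i => f (i, j) := by
    intro j
    exact (rowlem d (g * ((j : ℝ) + 1)) hd (by positivity)).1.congr
      (fun i => by simp only [hfdef]; rw [show d ^ 2 * ((i:ℝ)+1) ^ 2 + (g * ((j:ℝ)+1)) ^ 2
        = d ^ 2 * ((i:ℝ)+1) ^ 2 + g ^ 2 * ((j:ℝ)+1) ^ 2 from by ring])
  have h₂b : ∀ j : ℕ, ∑' i, f (i, j) ≤ 3 * π / (2 * d * g ^ 5) * (1 / ((j:ℝ)+1) ^ 5) := by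
    intro j
    have h := (rowlem d (g * ((j : ℝ) + 1)) hd (by positivity)).2
    have he : ∑' i : ℕ, 8 / (d ^ 2 * ((i:ℝ)+1) ^ 2 + (g * ((j:ℝ)+1)) ^ 2) ^ 3
        = ∑' i, f (i, j) := by
      apply tsum_congr; intro i
      simp only [hfdef]
      rw [show d ^ 2 * ((i:ℝ)+1) ^ 2 + (g * ((j:ℝ)+1)) ^ 2
        = d ^ 2 * ((i:ℝ)+1) ^ 2 + g ^ 2 * ((j:ℝ)+1) ^ 2 from by ring]
    rw [he] at h
    refine h.trans (le_of_eq ?_)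
    have : ((j:ℝ)+1) ≠ 0 := by positivity
    field_simp
  have hrowsum : Summable fun i => ∑' j, f (i, j) := by
    apply Summable.of_nonneg_of_le (fun i => tsum_nonneg (fun j => hfnn _)) h₁b
    exact hZ.mul_left _
  have hcolsum : Summable fun j => ∑' i, f (i, j) := by
    apply Summable.of_nonneg_of_le (fun j => tsum_nonneg (fun i => hfnn _)) h₂b
    exact hZ.mul_left _
  have hS : Summable f := (summable_prod_of_nonneg hfnn).mpr ⟨h₁, hrowsum⟩
  -- second series
  have hs2nn : ∀ i : ℕ, 0 ≤ 4 / ((i : ℝ) * d + g) ^ 6 := by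
    intro i
    have : (0:ℝ) < (i:ℝ) * d + g := by positivity
    positivity
  have hs2b : ∀ N : ℕ, ∑ i ∈ Finset.range N, 4 / ((i : ℝ) * d + g) ^ 6
      ≤ 4 / g ^ 6 + 4 / (5 * d * g ^ 5) := by
    intro N
    have hB : (0:ℝ) ≤ 4 / g ^ 6 + 4 / (5 * d * g ^ 5) := by positivity
    match N with
    | 0 => simpa using hB
    | Nat.succ n =>
      rw [Finset.sum_range_succ']
      have h0 : 4 / ((0:ℕ) * d + g : ℝ) ^ 6 = 4 / g ^ 6 := by norm_num
      have hshift : ∑ i ∈ Finset.range n, 4 / (((i + 1 : ℕ) : ℝ) * d + g) ^ 6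
          = 4 * ∑ i ∈ Finset.range n, 1 / (((i : ℝ) + 1) * d + g) ^ 6 := by
        rw [Finset.mul_sum]
        exact Finset.sum_congr rfl (fun i _ => by push_cast; ring)
      push_cast
      push_cast at hshift
      rw [hshift]
      have hk := key2 d g hd hg n
      have : 4 * ∑ i ∈ Finset.range n, 1 / (((i : ℝ) + 1) * d + g) ^ 6
          ≤ 4 / (5 * d * g ^ 5) := by
        calc 4 * ∑ i ∈ Finset.range n, 1 / (((i : ℝ) + 1) * d + g) ^ 6
            ≤ 4 * (1 / (5 * d * g ^ 5)) := by linarith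
          _ = 4 / (5 * d * g ^ 5) := by ring
      linarith
  have hs2 : Summable (fun i : ℕ => 4 / ((i : ℝ) * d + g) ^ 6) :=
    summable_of_sum_range_le hs2nn hs2b
  have hs2t : ∑' i : ℕ, 4 / ((i : ℝ) * d + g) ^ 6 ≤ 4 / g ^ 6 + 4 / (5 * d * g ^ 5) :=
    Real.tsum_le_of_sum_range_le hs2nn hs2b
  refine ⟨hS, hs2, hZ, ?_⟩
  -- first tsum bound
  have e1 : ∑' p : ℕ × ℕ, f p = ∑' (i : ℕ) (j : ℕ), f (i, j) := hS.tsum_prod' h₁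
  have e2 : ∑' (j : ℕ) (i : ℕ), f (i, j) = ∑' (i : ℕ) (j : ℕ), f (i, j) :=
    hS.tsum_comm' h₁ h₂
  have hfirst : ∑' p : ℕ × ℕ, f p ≤ 3 * π / (2 * d * g ^ 5) * Z := by
    rw [e1, ← e2]
    calc ∑' (j : ℕ) (i : ℕ), f (i, j)
        ≤ ∑' j : ℕ, 3 * π / (2 * d * g ^ 5) * (1 / ((j:ℝ)+1) ^ 5) :=
          Summable.tsum_le_tsum h₂b hcolsum (hZ.mul_left _)
      _ = 3 * π / (2 * d * g ^ 5) * Z := tsum_mul_left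
  have hRHS : (1 / d ^ 6) * ((3 * Real.pi * Z) / 2 + 4 / 5 + 4 * (d / g)) * (d / g) ^ 5
      = 3 * π / (2 * d * g ^ 5) * Z + (4 / g ^ 6 + 4 / (5 * d * g ^ 5)) := by
    field_simp
    ring
  rw [hRHS]
  exact add_le_add hfirst hs2t
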